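/- Every term graph over a signature Σ has a correct abstraction-prefix function for the λ-signature variant in at most one way: if P₁ and P₂ are both correct abstraction-prefix functions for a term graph G over the signature {@, λ, 0, S, •}, then P₁ = P₂. -/
import Mathlib


/-- A (root-connected) term graph over signature `Sig` with arity function `ar`,
    with vertex type `V`. -/
structure TermGraph (Sig : Type) (ar : Sig → ℕ) (V : Type) where
  lab : V → Sig
  args : V → List V
  root : V
  arity_ok : ∀ v, (args v).length = ar (lab v)
  rooted : ∀ v, Relation.ReflTransGen (fun a b => b ∈ args a) root v

/-- `R` is a bisimulation between term graphs `G₁` and `G₂`. -/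
def IsBisim {Sig : Type} {ar : Sig → ℕ} {V₁ V₂ : Type}
    (G₁ : TermGraph Sig ar V₁) (G₂ : TermGraph Sig ar V₂)
    (R : V₁ → V₂ → Prop) : Prop :=
  R G₁.root G₂.root ∧
  (∀ v w, R v w → G₁.lab v = G₂.lab w) ∧
  (∀ v w, R v w → List.Forall₂ R (G₁.args v) (G₂.args w))

/-- `G₁` and `G₂` are bisimilar. -/
def Bisim {Sig : Type} {ar : Sig → ℕ} {V₁ V₂ : Type}
    (G₁ : TermGraph Sig ar V₁) (G₂ : TermGraph Sig ar V₂) : Prop :=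
  ∃ R, IsBisim G₁ G₂ R

/-- `h` is a homomorphism of term graphs: it maps root to root, preserves labels,
    and commutes with the argument function. -/
def IsHom {Sig : Type} {ar : Sig → ℕ} {V₁ V₂ : Type}
    (G₁ : TermGraph Sig ar V₁) (G₂ : TermGraph Sig ar V₂) (h : V₁ → V₂) : Prop :=
  h G₁.root = G₂.root ∧
  (∀ v, G₂.lab (h v) = G₁.lab v) ∧
  (∀ v, G₂.args (h v) = (G₁.args v).map h)

/-- There exists a functional bisimulation (homomorphism) from `G₁` to `G₂`. -/
def FunBisim {Sig : Type} {ar : Sig → ℕ} {V₁ V₂ : Type}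
    (G₁ : TermGraph Sig ar V₁) (G₂ : TermGraph Sig ar V₂) : Prop :=
  ∃ h, IsHom G₁ G₂ h

/-- The signature for first-order lambda term graphs with scope delimiters:
    application, abstraction, variable occurrence, scope delimiter, black hole. -/
inductive LamSig : Type
  | app | lam | var | del | bh
deriving DecidableEq

/-- Arities for the lambda signature with scope delimiters. -/
def arL : LamSig → ℕ
  | .app => 2
  | .lam => 1
  | .var => 1
  | .del => 2
  | .bh  => 0

/-- A correct abstraction-prefix function for a term graph over the lambda signature
    with scope delimiters. -/
structure CorrectPrefix {V : Type} (G : TermGraph LamSig arL V)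
    (P : V → List V) : Prop where
  root : P G.root = []
  blackhole : ∀ v, G.lab v = LamSig.bh → P v = []
  lamCond : ∀ w v, G.lab w = LamSig.lam → (G.args w)[0]? = some v →
    P v = P w ++ [w]
  appCond : ∀ w v (k : ℕ), G.lab w = LamSig.app → (G.args w)[k]? = some v →
    P v = P w
  varCond : ∀ w v, G.lab w = LamSig.var → (G.args w)[0]? = some v →
    G.lab v = LamSig.lam ∧ P v ++ [v] = P w
  delCond0 : ∀ w v, G.lab w = LamSig.del → (G.args w)[0]? = some v →
    ∃ u, P v ++ [u] = P w
  delCond1 : ∀ w v, G.lab w = LamSig.del → (G.args w)[1]? = some v →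
    G.lab v = LamSig.lam ∧ P v ++ [v] = P w

/-- Uniqueness of correct abstraction-prefix functions: a term graph over the lambda
    signature with scope delimiters has at most one correct abstraction-prefix
    function. -/
theorem correctPrefix_unique {V : Type} (G : TermGraph LamSig arL V)
    (P₁ P₂ : V → List V)
    (h₁ : CorrectPrefix G P₁) (h₂ : CorrectPrefix G P₂) : P₁ = P₂ := by
  funext v
  have key : ∀ v, Relation.ReflTransGen (fun a b => b ∈ G.args a) G.root v →
      P₁ v = P₂ v := by
    intro v hv
    induction hv with
    | refl => rw [h₁.root, h₂.root]
    | tail _ hmem ih =>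
      rename_i b c _
      obtain ⟨k, hklt, he⟩ := List.mem_iff_getElem.mp hmem
      have hk : (G.args b)[k]? = some c := List.getElem?_eq_some_iff.mpr ⟨hklt, he⟩
      have hlen := G.arity_ok b
      cases hl : G.lab b with
      | app =>
        rw [h₁.appCond b c k hl hk, h₂.appCond b c k hl hk, ih]
      | lam =>
        have hk0 : k = 0 := by rw [hl] at hlen; simp [arL] at hlen; omega
        subst hk0
        rw [h₁.lamCond b c hl hk, h₂.lamCond b c hl hk, ih]
      | var =>
        have hk0 : k = 0 := by rw [hl] at hlen; simp [arL] at hlen; omega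
        subst hk0
        have e₁ := (h₁.varCond b c hl hk).2
        have e₂ := (h₂.varCond b c hl hk).2
        have : P₁ c = (P₁ b).dropLast := by rw [← e₁, List.dropLast_concat]
        rw [this, ih, ← e₂, List.dropLast_concat]
      | del =>
        have : k = 0 ∨ k = 1 := by rw [hl] at hlen; simp [arL] at hlen; omega
        rcases this with hk0 | hk1
        · subst hk0
          obtain ⟨u₁, e₁⟩ := h₁.delCond0 b c hl hk
          obtain ⟨u₂, e₂⟩ := h₂.delCond0 b c hl hk
          have : P₁ c = (P₁ b).dropLast := by rw [← e₁, List.dropLast_concat]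
          rw [this, ih, ← e₂, List.dropLast_concat]
        · subst hk1
          have e₁ := (h₁.delCond1 b c hl hk).2
          have e₂ := (h₂.delCond1 b c hl hk).2
          have : P₁ c = (P₁ b).dropLast := by rw [← e₁, List.dropLast_concat]
          rw [this, ih, ← e₂, List.dropLast_concat]
      | bh =>
        rw [hl] at hlen
        simp [arL] at hlen
        rw [hlen] at hklt
        simp at hklt
  exact key v (G.rooted v)
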